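/- Variational characterization of Bayes: let p ∈ Δ(S) have full support and f : S → ℝ be a positive likelihood function (f(s) = likelihood of the observed data at state s). Then the unique minimizer over q ∈ Δ(S) of D(q‖p) − ∑_s q(s) log f(s) is the Bayesian posterior q*(s) = p(s)f(s) / ∑_{s'} p(s')f(s'). -/

import Mathlib

open Real Finset

lemma pointwise_gibbs {a b : ℝ} (ha : 0 ≤ a) (hb : 0 < b) :
    a - b ≤ a * log (a / b) := by
  rcases eq_or_lt_of_le ha with h | h
  · simp [← h]; positivity
  · have hba : 0 < b / a := by positivity
    have := Real.log_le_sub_one_of_pos hba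
    have hlog : log (a / b) = - log (b / a) := by
      rw [← Real.log_inv]; congr 1; field_simp
    rw [hlog]
    have h2 : a * log (b / a) ≤ a * (b / a - 1) := by
      exact mul_le_mul_of_nonneg_left this ha
    have h3 : a * (b / a - 1) = b - a := by field_simp
    nlinarith

lemma pointwise_gibbs_strict {a b : ℝ} (ha : 0 ≤ a) (hb : 0 < b) (hne : a ≠ b) :
    a - b < a * log (a / b) := by
  rcases eq_or_lt_of_le ha with h | h
  · simp [← h]; positivity
  · have hba : 0 < b / a := by positivity
    have hne1 : b / a ≠ 1 := by
      intro hc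
      exact hne (by field_simp at hc; linarith)
    have := Real.log_lt_sub_one_of_pos hba hne1
    have hlog : log (a / b) = - log (b / a) := by
      rw [← Real.log_inv]; congr 1; field_simp
    rw [hlog]
    have h2 : a * log (b / a) < a * (b / a - 1) := by
      exact mul_lt_mul_of_pos_left this h
    have h3 : a * (b / a - 1) = b - a := by field_simp
    nlinarith

lemma gibbs {S : Type*} [Fintype S] (q r : S → ℝ) (hq : ∀ s, 0 ≤ q s)
    (hr : ∀ s, 0 < r s) (hq1 : ∑ s, q s = 1) (hr1 : ∑ s, r s = 1) :
    0 ≤ ∑ s, q s * log (q s / r s) := by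
  have h : ∑ s, (q s - r s) ≤ ∑ s, q s * log (q s / r s) :=
    Finset.sum_le_sum fun s _ => pointwise_gibbs (hq s) (hr s)
  rwa [Finset.sum_sub_distrib, hq1, hr1, sub_self] at h

lemma gibbs_eq {S : Type*} [Fintype S] (q r : S → ℝ) (hq : ∀ s, 0 ≤ q s)
    (hr : ∀ s, 0 < r s) (hq1 : ∑ s, q s = 1) (hr1 : ∑ s, r s = 1)
    (heq : ∑ s, q s * log (q s / r s) = 0) : q = r := by
  by_contra hc
  have ⟨s0, hs0⟩ : ∃ s, q s ≠ r s := by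
    by_contra h; push_neg at h; exact hc (funext h)
  have h : ∑ s, (q s - r s) < ∑ s, q s * log (q s / r s) := by
    apply Finset.sum_lt_sum (fun s _ => pointwise_gibbs (hq s) (hr s))
    exact ⟨s0, Finset.mem_univ s0, pointwise_gibbs_strict (hq s0) (hr s0) hs0⟩
  rw [Finset.sum_sub_distrib, hq1, hr1, sub_self, heq] at h
  exact lt_irrefl 0 h

/-- Variational characterization of Bayes: the unique minimizer over
`q ∈ Δ(S)` of `D(q‖p) − ∑ s, q s * log (f s)` is the Bayesian posterior
`q*(s) = p s * f s / ∑ s', p s' * f s'`. -/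
theorem bayes_variational {S : Type*} [Fintype S] [Nonempty S]
    (p : S → ℝ) (hp0 : ∀ s, 0 < p s) (hp1 : ∑ s, p s = 1)
    (f : S → ℝ) (hf : ∀ s, 0 < f s)
    (qstar : S → ℝ) (hqstar : ∀ s, qstar s = p s * f s / ∑ s', p s' * f s') :
    ((∀ s, 0 ≤ qstar s) ∧ ∑ s, qstar s = 1) ∧
    (∀ q : S → ℝ, (∀ s, 0 ≤ q s) → ∑ s, q s = 1 →
      (∑ s, qstar s * log (qstar s / p s)) - (∑ s, qstar s * log (f s)) ≤
        (∑ s, q s * log (q s / p s)) - (∑ s, q s * log (f s))) ∧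
    (∀ q : S → ℝ, (∀ s, 0 ≤ q s) → ∑ s, q s = 1 →
      (∑ s, q s * log (q s / p s)) - (∑ s, q s * log (f s)) =
        (∑ s, qstar s * log (qstar s / p s)) - (∑ s, qstar s * log (f s)) →
      q = qstar) := by
  set Z : ℝ := ∑ s', p s' * f s' with hZ
  have hZ0 : 0 < Z := Finset.sum_pos (fun s _ => mul_pos (hp0 s) (hf s)) Finset.univ_nonempty
  have hqs0 : ∀ s, 0 < qstar s := fun s => by
    rw [hqstar s]; exact div_pos (mul_pos (hp0 s) (hf s)) hZ0
  have hqs1 : ∑ s, qstar s = 1 := by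
    simp only [hqstar]
    rw [← Finset.sum_div]
    field_simp
    exact hZ.symm
  -- key pointwise identity
  have key : ∀ (q : S → ℝ), (∀ s, 0 ≤ q s) → ∀ s,
      q s * log (q s / qstar s) =
        q s * log (q s / p s) - q s * log (f s) + q s * log Z := by
    intro q hq s
    rcases eq_or_lt_of_le (hq s) with h | h
    · simp [← h]
    · rw [hqstar s]
      have hps := hp0 s
      have hfs := hf s
      rw [div_div_eq_mul_div, Real.log_div (by positivity) (by positivity),
        Real.log_mul (by positivity) (by positivity),
        Real.log_mul (by positivity) (by positivity),
        Real.log_div (by positivity) (by positivity)]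
      ring
  have keysum : ∀ (q : S → ℝ), (∀ s, 0 ≤ q s) → ∑ s, q s = 1 →
      ∑ s, q s * log (q s / qstar s) =
        (∑ s, q s * log (q s / p s)) - (∑ s, q s * log (f s)) + log Z := by
    intro q hq hq1
    calc ∑ s, q s * log (q s / qstar s)
        = ∑ s, (q s * log (q s / p s) - q s * log (f s) + q s * log Z) :=
          Finset.sum_congr rfl (fun s _ => key q hq s)
      _ = (∑ s, q s * log (q s / p s)) - (∑ s, q s * log (f s))
            + (∑ s, q s) * log Z := by
          rw [Finset.sum_add_distrib, Finset.sum_sub_distrib, ← Finset.sum_mul]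
      _ = _ := by rw [hq1, one_mul]
  have hstar_self : ∑ s, qstar s * log (qstar s / qstar s) = 0 := by
    apply Finset.sum_eq_zero
    intro s _
    rw [div_self (ne_of_gt (hqs0 s))]
    simp
  have hstar_val : (∑ s, qstar s * log (qstar s / p s)) - (∑ s, qstar s * log (f s))
      = - log Z := by
    have := keysum qstar (fun s => (hqs0 s).le) hqs1
    rw [hstar_self] at this
    linarith
  refine ⟨⟨fun s => (hqs0 s).le, hqs1⟩, ?_, ?_⟩
  · intro q hq hq1
    have hg := gibbs q qstar hq hqs0 hq1 hqs1
    have hk := keysum q hq hq1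
    rw [hstar_val]
    linarith
  · intro q hq hq1 heq
    apply gibbs_eq q qstar hq hqs0 hq1 hqs1
    have hk := keysum q hq hq1
    rw [hstar_val] at heq
    linarith
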